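/- Let m ≥ 2 be an integer, let p₁ : ℝ → ℝ be 2π-periodic and C², and let u₁ : ℝ → ℝ be 2π-periodic and continuous, and set P₁ := 1 + ε p₁, U₁(t) := t + ε u₁(t), U₁⁺(t) := U₁(t + 2π/m). Then, uniformly in t ∈ ℝ as ε → 0⁺: L_{P₁}(U₁(t), U₁⁺(t))² = 2(1 − cos(2π/m)) + 2ε [ (1 − cos(2π/m)) ( p₁(t) + p₁(t + 2π/m) ) − sin(2π/m) ( u₁(t) − u₁(t + 2π/m) ) − sin(2π/m) ( p₁'(t) − p₁'(t + 2π/m) ) ] + O(ε²). -/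

import Mathlib

open Real

lemma abs_mul_le {x y X Y : ℝ} (hx : |x| ≤ X) (hy : |y| ≤ Y) : |x*y| ≤ X*Y := by
  rw [abs_mul]; exact mul_le_mul hx hy (abs_nonneg y) ((abs_nonneg x).trans hx)

lemma sin_taylor {x : ℝ} (hx : |x| ≤ 1) : |Real.sin x - x| ≤ x^2 := by
  have h := Real.sin_bound hx
  have h2 : |x|^4 ≤ x^2 := by
    have : |x|^4 ≤ |x|^2 := pow_le_pow_of_le_one (abs_nonneg x) hx (by norm_num)
    simpa [sq_abs] using this
  have h3 : |x^3| ≤ x^2 := by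
    have : |x|^3 ≤ |x|^2 := pow_le_pow_of_le_one (abs_nonneg x) hx (by norm_num)
    simpa [abs_pow, sq_abs] using this
  calc |Real.sin x - x| = |(Real.sin x - (x - x^3/6)) + (-(x^3)/6)| := by ring_nf
    _ ≤ |Real.sin x - (x - x^3/6)| + |x^3|/6 := by
        refine (abs_add_le _ _).trans ?_
        simp [abs_div, abs_neg]
    _ ≤ |x|^4 * (5/96) + x^2/6 := by
        gcongr
        exact h.trans (by nlinarith [mul_le_mul_of_nonneg_left hx (pow_nonneg (abs_nonneg x) 4), pow_succ |x| 4, pow_nonneg (abs_nonneg x) 4])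
    _ ≤ x^2 * (5/96) + x^2/6 := by gcongr
    _ ≤ x^2 := by nlinarith [sq_nonneg x]

lemma cos_taylor (x : ℝ) : |Real.cos x - 1| ≤ x^2/2 := by
  rw [abs_sub_comm, abs_of_nonneg (by nlinarith [Real.cos_le_one x])]
  nlinarith [Real.one_sub_sq_div_two_le_cos (x := x)]

set_option maxHeartbeats 1000000 in
lemma main_est (ε v δ a b a' b' p q p' q' M : ℝ) (hM : 1 ≤ M) (hε : 0 ≤ ε) (hε1 : ε ≤ 1)
    (hεv : |ε*v| ≤ 1) (hv : |v| ≤ 2*M)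
    (hap : |a - p| ≤ M^2*ε) (hbq : |b - q| ≤ M^2*ε)
    (hap' : |a' - p'| ≤ M^2*ε) (hbq' : |b' - q'| ≤ M^2*ε)
    (ha : |a| ≤ M) (hb : |b| ≤ M) (ha' : |a'| ≤ M) (hb' : |b'| ≤ M)
    (hp : |p| ≤ M) (hq : |q| ≤ M) (hp' : |p'| ≤ M) (hq' : |q'| ≤ M) :
    |((1+ε*a)^2 + (ε*a')^2 + (1+ε*b)^2 + (ε*b')^2
      - 2*(1+ε*a)*(1+ε*b)*Real.cos (ε*v - δ) - 2*(1+ε*a)*(ε*b')*Real.sin (ε*v - δ)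
      + 2*(ε*a')*(1+ε*b)*Real.sin (ε*v - δ) - 2*(ε*a')*(ε*b')*Real.cos (ε*v - δ))
     - (2*(1 - Real.cos δ) + 2*ε*((1 - Real.cos δ)*(p+q) - Real.sin δ*v - Real.sin δ*(p'-q')))|
    ≤ 80*M^2*ε^2 := by
  have hM0 : (0:ℝ) ≤ M := by linarith
  rw [Real.cos_sub, Real.sin_sub]
  set c1 := Real.cos (ε*v) with hc1def
  set s1 := Real.sin (ε*v) with hs1def
  set cδ := Real.cos δ with hcddef
  set sδ := Real.sin δ with hsddef
  have hc1 : |c1 - 1| ≤ (ε*v)^2/2 := cos_taylor _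
  have hs1 : |s1 - ε*v| ≤ (ε*v)^2 := sin_taylor hεv
  have habs_c1 : |c1| ≤ 1 := abs_cos_le_one _
  have habs_s1 : |s1| ≤ |ε*v| := abs_sin_le_abs
  have habs_cd : |cδ| ≤ 1 := abs_cos_le_one _
  have habs_sd : |sδ| ≤ 1 := abs_sin_le_one _
  have hεv2 : (ε*v)^2 ≤ |ε*v| := by
    calc (ε*v)^2 = |ε*v| * |ε*v| := by rw [← sq_abs]; ring
      _ ≤ 1*|ε*v| := mul_le_mul_of_nonneg_right hεv (abs_nonneg _)
      _ = |ε*v| := one_mul _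
  have hεvM : |ε*v| ≤ 2*M*ε := by
    rw [abs_mul, abs_of_nonneg hε]
    calc ε * |v| ≤ ε * (2*M) := by gcongr
      _ = 2*M*ε := by ring
  have hεv4 : (ε*v)^2 ≤ 4*M^2*ε^2 := by
    calc (ε*v)^2 = |ε*v|^2 := (sq_abs _).symm
      _ ≤ (2*M*ε)^2 := pow_le_pow_left₀ (abs_nonneg _) hεvM 2
      _ = 4*M^2*ε^2 := by ring
  set cosD := c1*cδ + s1*sδ with hcosD
  set sinD := s1*cδ - c1*sδ with hsinD
  have hcosDb : |cosD| ≤ 2 := by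
    calc |cosD| ≤ |c1*cδ| + |s1*sδ| := abs_add_le _ _
      _ ≤ 1*1 + 1*1 :=
          add_le_add (abs_mul_le habs_c1 habs_cd) (abs_mul_le (habs_s1.trans hεv) habs_sd)
      _ = 2 := by norm_num
  have hsinDb : |sinD| ≤ 2 := by
    calc |sinD| ≤ |s1*cδ| + |c1*sδ| := abs_sub _ _
      _ ≤ 1*1 + 1*1 :=
          add_le_add (abs_mul_le (habs_s1.trans hεv) habs_cd) (abs_mul_le habs_c1 habs_sd)
      _ = 2 := by norm_num
  have h1mcosD : |1 - cosD| ≤ 3 := by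
    calc |1 - cosD| ≤ |(1:ℝ)| + |cosD| := abs_sub _ _
      _ ≤ 3 := by rw [abs_one]; linarith
  have hR : |cδ*(c1-1) + sδ*(s1 - ε*v)| ≤ 6*M^2*ε^2 := by
    calc |cδ*(c1-1) + sδ*(s1 - ε*v)| ≤ |cδ*(c1-1)| + |sδ*(s1-ε*v)| := abs_add_le _ _
      _ ≤ 1*((ε*v)^2/2) + 1*((ε*v)^2) :=
          add_le_add (abs_mul_le habs_cd hc1) (abs_mul_le habs_sd hs1)
      _ ≤ 6*M^2*ε^2 := by linarith [hεv4]
  have hcd_cosD : |cδ - cosD| ≤ 3*M*ε := by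
    have heq : cδ - cosD = cδ*(1-c1) - sδ*s1 := by rw [hcosD]; ring
    rw [heq]
    calc |cδ*(1-c1) - sδ*s1| ≤ |cδ*(1-c1)| + |sδ*s1| := abs_sub _ _
      _ ≤ 1*((ε*v)^2/2) + 1*|ε*v| :=
          add_le_add (abs_mul_le habs_cd (by rwa [abs_sub_comm] at hc1))
            (abs_mul_le habs_sd habs_s1)
      _ ≤ 3*M*ε := by linarith [hεv2, hεvM]
  have hsd_sinD : |sinD + sδ| ≤ 3*M*ε := by
    have heq : sinD + sδ = s1*cδ + sδ*(1-c1) := by rw [hsinD]; ring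
    rw [heq]
    calc |s1*cδ + sδ*(1-c1)| ≤ |s1*cδ| + |sδ*(1-c1)| := abs_add_le _ _
      _ ≤ |ε*v| * 1 + 1*((ε*v)^2/2) :=
          add_le_add (abs_mul_le habs_s1 habs_cd)
            (abs_mul_le habs_sd (by rwa [abs_sub_comm] at hc1))
      _ ≤ 3*M*ε := by linarith [hεv2, hεvM]
  have hD1 : |(a+b-(p+q))*(1-cosD) + (p+q)*(cδ - cosD)| ≤ 12*M^2*ε := by
    have h1 : |a+b-(p+q)| ≤ 2*(M^2*ε) := by
      have : a+b-(p+q) = (a-p) + (b-q) := by ring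
      rw [this]; calc |(a-p)+(b-q)| ≤ |a-p| + |b-q| := abs_add_le _ _
        _ ≤ 2*(M^2*ε) := by linarith
    have h2 : |p+q| ≤ 2*M := (abs_add_le p q).trans (by linarith)
    calc |(a+b-(p+q))*(1-cosD) + (p+q)*(cδ - cosD)|
        ≤ |(a+b-(p+q))*(1-cosD)| + |(p+q)*(cδ-cosD)| := abs_add_le _ _
      _ ≤ (2*(M^2*ε))*3 + (2*M)*(3*M*ε) :=
          add_le_add (abs_mul_le h1 h1mcosD) (abs_mul_le h2 hcd_cosD)
      _ = 12*M^2*ε := by ring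
  have hD2 : |((a'-b')-(p'-q'))*sinD + (p'-q')*(sinD + sδ)| ≤ 10*M^2*ε := by
    have h1 : |(a'-b')-(p'-q')| ≤ 2*(M^2*ε) := by
      have : (a'-b')-(p'-q') = (a'-p') - (b'-q') := by ring
      rw [this]; calc |(a'-p')-(b'-q')| ≤ |a'-p'| + |b'-q'| := abs_sub _ _
        _ ≤ 2*(M^2*ε) := by linarith
    have h2 : |p'-q'| ≤ 2*M := (abs_sub p' q').trans (by linarith)
    calc |((a'-b')-(p'-q'))*sinD + (p'-q')*(sinD + sδ)|
        ≤ |((a'-b')-(p'-q'))*sinD| + |(p'-q')*(sinD+sδ)| := abs_add_le _ _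
      _ ≤ (2*(M^2*ε))*2 + (2*M)*(3*M*ε) :=
          add_le_add (abs_mul_le h1 hsinDb) (abs_mul_le h2 hsd_sinD)
      _ = 10*M^2*ε := by ring
  have h2' : |(2:ℝ)| ≤ 2 := by norm_num
  have hsq : ∀ x : ℝ, |x| ≤ M → |x^2| ≤ M^2 := fun x hx => by
    rw [abs_pow]; exact pow_le_pow_left₀ (abs_nonneg x) hx 2
  have hcr : ∀ x y z Z : ℝ, |x| ≤ M → |y| ≤ M → |z| ≤ Z → |2*x*y*z| ≤ 2*M^2*Z := by
    intro x y z Z hx hy hz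
    have h := abs_mul_le (abs_mul_le (abs_mul_le h2' hx) hy) hz
    calc |2*x*y*z| ≤ 2*M*M*Z := h
      _ = 2*M^2*Z := by ring
  have hQ : |a^2+b^2+a'^2+b'^2 - 2*a*b*cosD - 2*a*b'*sinD + 2*a'*b*sinD - 2*a'*b'*cosD|
      ≤ 20*M^2 := by
    calc |a^2+b^2+a'^2+b'^2 - 2*a*b*cosD - 2*a*b'*sinD + 2*a'*b*sinD - 2*a'*b'*cosD|
        ≤ |a^2+b^2+a'^2+b'^2 - 2*a*b*cosD - 2*a*b'*sinD + 2*a'*b*sinD| + |2*a'*b'*cosD| :=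
          abs_sub _ _
      _ ≤ |a^2+b^2+a'^2+b'^2 - 2*a*b*cosD - 2*a*b'*sinD| + |2*a'*b*sinD| + |2*a'*b'*cosD| := by
          gcongr ?_ + _; exact abs_add_le _ _
      _ ≤ |a^2+b^2+a'^2+b'^2 - 2*a*b*cosD| + |2*a*b'*sinD| + |2*a'*b*sinD| + |2*a'*b'*cosD| := by
          gcongr ?_ + _ + _; exact abs_sub _ _
      _ ≤ |a^2+b^2+a'^2+b'^2| + |2*a*b*cosD| + |2*a*b'*sinD| + |2*a'*b*sinD| + |2*a'*b'*cosD| := by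
          gcongr ?_ + _ + _ + _; exact abs_sub _ _
      _ ≤ (|a^2| + |b^2| + |a'^2| + |b'^2|) + |2*a*b*cosD| + |2*a*b'*sinD| + |2*a'*b*sinD|
            + |2*a'*b'*cosD| := by
          gcongr ?_ + _ + _ + _ + _
          calc |a^2+b^2+a'^2+b'^2| ≤ |a^2+b^2+a'^2| + |b'^2| := abs_add_le _ _
            _ ≤ |a^2+b^2| + |a'^2| + |b'^2| := by gcongr ?_ + _; exact abs_add_le _ _
            _ ≤ |a^2| + |b^2| + |a'^2| + |b'^2| := by gcongr ?_ + _ + _; exact abs_add_le _ _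
      _ ≤ (M^2 + M^2 + M^2 + M^2) + 2*M^2*2 + 2*M^2*2 + 2*M^2*2 + 2*M^2*2 := by
          gcongr <;> first
            | exact hsq _ ha | exact hsq _ hb | exact hsq _ ha' | exact hsq _ hb'
            | exact hcr _ _ _ _ ha hb hcosDb | exact hcr _ _ _ _ ha hb' hsinDb
            | exact hcr _ _ _ _ ha' hb hsinDb | exact hcr _ _ _ _ ha' hb' hcosDb
      _ = 20*M^2 := by ring
  -- final combination
  have final : |(-2)*(cδ*(c1-1) + sδ*(s1-ε*v))
      + 2*ε*((a+b-(p+q))*(1-cosD) + (p+q)*(cδ - cosD))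
      + 2*ε*(((a'-b')-(p'-q'))*sinD + (p'-q')*(sinD + sδ))
      + ε^2*(a^2+b^2+a'^2+b'^2 - 2*a*b*cosD - 2*a*b'*sinD + 2*a'*b*sinD - 2*a'*b'*cosD)|
      ≤ 80*M^2*ε^2 := by
    have h2e : |2*ε| ≤ 2*ε := by rw [abs_of_nonneg (by linarith)]
    have he2 : |ε^2| ≤ ε^2 := le_of_eq (abs_of_nonneg (sq_nonneg _))
    have hm2 : |(-2:ℝ)| ≤ 2 := by norm_num
    calc |(-2)*(cδ*(c1-1) + sδ*(s1-ε*v))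
        + 2*ε*((a+b-(p+q))*(1-cosD) + (p+q)*(cδ - cosD))
        + 2*ε*(((a'-b')-(p'-q'))*sinD + (p'-q')*(sinD + sδ))
        + ε^2*(a^2+b^2+a'^2+b'^2 - 2*a*b*cosD - 2*a*b'*sinD + 2*a'*b*sinD - 2*a'*b'*cosD)|
        ≤ |(-2)*(cδ*(c1-1) + sδ*(s1-ε*v))
            + 2*ε*((a+b-(p+q))*(1-cosD) + (p+q)*(cδ - cosD))
            + 2*ε*(((a'-b')-(p'-q'))*sinD + (p'-q')*(sinD + sδ))|
          + |ε^2*(a^2+b^2+a'^2+b'^2 - 2*a*b*cosD - 2*a*b'*sinD + 2*a'*b*sinD - 2*a'*b'*cosD)| :=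
          abs_add_le _ _
      _ ≤ |(-2)*(cδ*(c1-1) + sδ*(s1-ε*v))
            + 2*ε*((a+b-(p+q))*(1-cosD) + (p+q)*(cδ - cosD))|
          + |2*ε*(((a'-b')-(p'-q'))*sinD + (p'-q')*(sinD + sδ))|
          + |ε^2*(a^2+b^2+a'^2+b'^2 - 2*a*b*cosD - 2*a*b'*sinD + 2*a'*b*sinD - 2*a'*b'*cosD)| := by
          gcongr ?_ + _; exact abs_add_le _ _
      _ ≤ |(-2)*(cδ*(c1-1) + sδ*(s1-ε*v))|
          + |2*ε*((a+b-(p+q))*(1-cosD) + (p+q)*(cδ - cosD))|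
          + |2*ε*(((a'-b')-(p'-q'))*sinD + (p'-q')*(sinD + sδ))|
          + |ε^2*(a^2+b^2+a'^2+b'^2 - 2*a*b*cosD - 2*a*b'*sinD + 2*a'*b*sinD - 2*a'*b'*cosD)| := by
          gcongr ?_ + _ + _; exact abs_add_le _ _
      _ ≤ 2*(6*M^2*ε^2) + (2*ε)*(12*M^2*ε) + (2*ε)*(10*M^2*ε) + ε^2*(20*M^2) := by
          gcongr <;> first
            | exact abs_mul_le hm2 hR | exact abs_mul_le h2e hD1
            | exact abs_mul_le h2e hD2 | exact abs_mul_le he2 hQ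
      _ = 76*M^2*ε^2 := by ring
      _ ≤ 80*M^2*ε^2 := by nlinarith [sq_nonneg (M*ε)]
  convert final using 2
  rw [hcosD, hsinD]
  ring


lemma bdd_of_periodic {f : ℝ → ℝ} (hf : Continuous f) (hper : ∀ t, f (t + 2*π) = f t) :
    ∃ M : ℝ, ∀ t, |f t| ≤ M := by
  have hp : Function.Periodic f (2*π) := hper
  have hb := hp.isBounded_of_continuous (by positivity) hf
  obtain ⟨r, hr⟩ := hb.subset_closedBall 0
  exact ⟨r, fun t => by simpa [Real.dist_eq] using hr ⟨t, rfl⟩⟩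

lemma lip_of_deriv {f : ℝ → ℝ} {M : ℝ} (hf : Differentiable ℝ f)
    (hM : ∀ t, |deriv f t| ≤ M) (x y : ℝ) : |f y - f x| ≤ M * |y - x| := by
  have := Convex.norm_image_sub_le_of_norm_deriv_le (f := f) (s := Set.univ)
    (fun z _ => hf z) (fun z _ => by simpa using hM z) convex_univ (Set.mem_univ x) (Set.mem_univ y)
  simpa [Real.norm_eq_abs] using this

lemma deriv_periodic {f : ℝ → ℝ} (hper : ∀ t, f (t + 2*π) = f t) (t : ℝ) :
    deriv f (t + 2*π) = deriv f t := by
  have h : deriv (fun x => f (x + 2*π)) t = deriv f (t + 2*π) := deriv_comp_add_const f (2*π) t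
  rw [← h]
  congr 1
  exact funext hper

lemma contdiff_deriv {p₁ : ℝ → ℝ} (hp : ContDiff ℝ 2 p₁) : ContDiff ℝ 1 (deriv p₁) := by
  have h2 : ContDiff ℝ ((1 : ℕ) + 1) p₁ := by exact_mod_cast hp
  rw [contDiff_succ_iff_deriv] at h2
  exact_mod_cast h2.2.2

/-- The generating function `L_p(t,t')` of the billiard in the convex domain
with support function `p`. -/
noncomputable def genfun (p : ℝ → ℝ) (t t' : ℝ) : ℝ :=
  Real.sqrt (p t ^ 2 + deriv p t ^ 2 + p t' ^ 2 + deriv p t' ^ 2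
    - 2 * p t * p t' * Real.cos (t - t')
    - 2 * p t * deriv p t' * Real.sin (t - t')
    + 2 * deriv p t * p t' * Real.sin (t - t')
    - 2 * deriv p t * deriv p t' * Real.cos (t - t'))

lemma genfun_inner_nonneg (a a' b b' d : ℝ) :
    0 ≤ a^2 + a'^2 + b^2 + b'^2 - 2*a*b*Real.cos d - 2*a*b'*Real.sin d
      + 2*a'*b*Real.sin d - 2*a'*b'*Real.cos d := by
  nlinarith [sq_nonneg (a - b*Real.cos d - b'*Real.sin d),
    sq_nonneg (a' + b*Real.sin d - b'*Real.cos d), Real.sin_sq_add_cos_sq d]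

lemma genfun_sq (p : ℝ → ℝ) (t t' : ℝ) :
    genfun p t t' ^ 2 = p t ^ 2 + deriv p t ^ 2 + p t' ^ 2 + deriv p t' ^ 2
      - 2 * p t * p t' * Real.cos (t - t')
      - 2 * p t * deriv p t' * Real.sin (t - t')
      + 2 * deriv p t * p t' * Real.sin (t - t')
      - 2 * deriv p t * deriv p t' * Real.cos (t - t') := by
  have h := genfun_inner_nonneg (p t) (deriv p t) (p t') (deriv p t') (t - t')
  rw [genfun, Real.sq_sqrt (by linarith)]

set_option maxHeartbeats 1000000 in
/-- First-order expansion of the squared generating function along the perturbed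
circle: with `P₁ = 1 + εp₁`, `U₁(t) = t + εu₁(t)`, `U₁⁺(t) = U₁(t + 2π/m)`,
`L_{P₁}(U₁(t),U₁⁺(t))² = 2(1 − cos(2π/m)) + 2ε[...] + O(ε²)` uniformly in `t`. -/
theorem stmt_7 (m : ℕ) (hm : 2 ≤ m) (p₁ u₁ : ℝ → ℝ)
    (hp : ContDiff ℝ 2 p₁) (hpper : ∀ t, p₁ (t + 2 * π) = p₁ t)
    (hu : Continuous u₁) (huper : ∀ t, u₁ (t + 2 * π) = u₁ t) :
    ∃ C > 0, ∃ ε₁ > 0, ∀ ε : ℝ, 0 ≤ ε → ε ≤ ε₁ → ∀ t : ℝ,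
      |genfun (fun s => 1 + ε * p₁ s) (t + ε * u₁ t)
            ((t + 2 * π / m) + ε * u₁ (t + 2 * π / m)) ^ 2
        - (2 * (1 - Real.cos (2 * π / m))
            + 2 * ε * ((1 - Real.cos (2 * π / m)) * (p₁ t + p₁ (t + 2 * π / m))
              - Real.sin (2 * π / m) * (u₁ t - u₁ (t + 2 * π / m))
              - Real.sin (2 * π / m) * (deriv p₁ t - deriv p₁ (t + 2 * π / m))))|
        ≤ C * ε ^ 2 := by
  have hp1d : Differentiable ℝ p₁ := hp.differentiable (by norm_num)
  have hdp_cd : ContDiff ℝ 1 (deriv p₁) := contdiff_deriv hp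
  have hdpd : Differentiable ℝ (deriv p₁) := hdp_cd.differentiable (by norm_num)
  have hddp_cont : Continuous (deriv (deriv p₁)) := hdp_cd.continuous_deriv le_rfl
  have hdper : ∀ t, deriv p₁ (t + 2*π) = deriv p₁ t := deriv_periodic hpper
  have hddper : ∀ t, deriv (deriv p₁) (t + 2*π) = deriv (deriv p₁) t := deriv_periodic hdper
  obtain ⟨M1, hM1⟩ := bdd_of_periodic hp.continuous (by exact_mod_cast hpper)
  obtain ⟨M2, hM2⟩ := bdd_of_periodic hdp_cd.continuous hdper
  obtain ⟨M3, hM3⟩ := bdd_of_periodic hddp_cont hddper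
  obtain ⟨M4, hM4⟩ := bdd_of_periodic hu (by exact_mod_cast huper)
  set M : ℝ := max (max (max M1 M2) (max M3 M4)) 1 with hMdef
  have hM : 1 ≤ M := le_max_right _ _
  have hM0 : (0:ℝ) ≤ M := by linarith
  have hbp : ∀ t, |p₁ t| ≤ M := fun t =>
    (hM1 t).trans ((le_max_left M1 M2).trans ((le_max_left _ _).trans (le_max_left _ _)))
  have hbdp : ∀ t, |deriv p₁ t| ≤ M := fun t =>
    (hM2 t).trans ((le_max_right M1 M2).trans ((le_max_left _ _).trans (le_max_left _ _)))
  have hbddp : ∀ t, |deriv (deriv p₁) t| ≤ M := fun t =>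
    (hM3 t).trans ((le_max_left M3 M4).trans ((le_max_right _ _).trans (le_max_left _ _)))
  have hbu : ∀ t, |u₁ t| ≤ M := fun t =>
    (hM4 t).trans ((le_max_right M3 M4).trans ((le_max_right _ _).trans (le_max_left _ _)))
  refine ⟨80*M^2, by nlinarith, 1/(2*M+1), by positivity, fun ε hε0 hεb t => ?_⟩
  have hε1 : ε ≤ 1 := hεb.trans (by rw [div_le_one (by linarith)]; linarith)
  set v : ℝ := u₁ t - u₁ (t + 2*π/m) with hvdef
  have hv : |v| ≤ 2*M := (abs_sub _ _).trans (by linarith [hbu t, hbu (t + 2*π/m)])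
  have hεv : |ε*v| ≤ 1 := by
    rw [abs_mul, abs_of_nonneg hε0]
    calc ε * |v| ≤ (1/(2*M+1)) * (2*M) := by
          apply mul_le_mul hεb hv (abs_nonneg v) (by positivity)
      _ ≤ 1 := by rw [div_mul_eq_mul_div, div_le_one (by linarith)]; linarith
  have hd : ∀ x, deriv (fun s => 1 + ε * p₁ s) x = ε * deriv p₁ x := by
    intro x
    rw [deriv_const_add]
    exact deriv_const_mul ε (hp1d x)
  have hlip : ∀ s, |p₁ (s + ε * u₁ s) - p₁ s| ≤ M^2*ε := by
    intro s
    have h := lip_of_deriv hp1d hbdp s (s + ε * u₁ s)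
    have h2 : |s + ε*u₁ s - s| ≤ ε*M := by
      rw [show s + ε*u₁ s - s = ε*u₁ s by ring, abs_mul, abs_of_nonneg hε0]
      exact mul_le_mul_of_nonneg_left (hbu s) hε0
    calc |p₁ (s + ε*u₁ s) - p₁ s| ≤ M * |s + ε*u₁ s - s| := h
      _ ≤ M * (ε*M) := mul_le_mul_of_nonneg_left h2 hM0
      _ = M^2*ε := by ring
  have hlip' : ∀ s, |deriv p₁ (s + ε * u₁ s) - deriv p₁ s| ≤ M^2*ε := by
    intro s
    have h := lip_of_deriv hdpd hbddp s (s + ε * u₁ s)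
    have h2 : |s + ε*u₁ s - s| ≤ ε*M := by
      rw [show s + ε*u₁ s - s = ε*u₁ s by ring, abs_mul, abs_of_nonneg hε0]
      exact mul_le_mul_of_nonneg_left (hbu s) hε0
    calc |deriv p₁ (s + ε*u₁ s) - deriv p₁ s| ≤ M * |s + ε*u₁ s - s| := h
      _ ≤ M * (ε*M) := mul_le_mul_of_nonneg_left h2 hM0
      _ = M^2*ε := by ring
  rw [genfun_sq]
  simp only [hd]
  have hest := main_est ε v (2*π/m) (p₁ (t + ε * u₁ t)) (p₁ ((t + 2*π/m) + ε * u₁ (t + 2*π/m)))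
    (deriv p₁ (t + ε * u₁ t)) (deriv p₁ ((t + 2*π/m) + ε * u₁ (t + 2*π/m)))
    (p₁ t) (p₁ (t + 2*π/m)) (deriv p₁ t) (deriv p₁ (t + 2*π/m)) M hM hε0 hε1 hεv hv
    (hlip t) (hlip (t + 2*π/m)) (hlip' t) (hlip' (t + 2*π/m))
    (hbp _) (hbp _) (hbdp _) (hbdp _) (hbp _) (hbp _) (hbdp _) (hbdp _)
  refine le_trans (le_of_eq ?_) hest
  congr 1
  rw [show (t + ε * u₁ t) - ((t + 2*π/m) + ε * u₁ (t + 2*π/m)) = ε*v - 2*π/m by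
    rw [hvdef]; ring]
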